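/- For all natural numbers n and m, R_{n+m}(x,y;u|q) = sum_{k=0}^m [m choose k]_q u^{binom(k,2)} x^{m-k} y^k R_n(x, q^{m-k} u^k y; u|q). -/

import Mathlib

open Finset

/-- The q-shifted factorial `(a;q)_n = ∏_{j=0}^{n-1} (1 - a q^j)`. -/
noncomputable def qPoch (a q : ℂ) (n : ℕ) : ℂ := ∏ j ∈ Finset.range n, (1 - a * q ^ j)

/-- The Gaussian binomial coefficient `[n choose k]_q = (q;q)_n / ((q;q)_k (q;q)_{n-k})`. -/
noncomputable def qBinom (q : ℂ) (n k : ℕ) : ℂ := qPoch q q n / (qPoch q q k * qPoch q q (n - k))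

/-- The u-deformed homogeneous polynomial
`R_n(x,y;u|q) = ∑_{k=0}^n [n choose k]_q u^{C(k,2)} x^{n-k} y^k`. -/
noncomputable def Rpoly (q : ℂ) (n : ℕ) (x y u : ℂ) : ℂ :=
  ∑ k ∈ Finset.range (n + 1), qBinom q n k * u ^ (k.choose 2) * x ^ (n - k) * y ^ k

/-- A recursively defined Gaussian binomial coefficient. -/
noncomputable def gb (q : ℂ) : ℕ → ℕ → ℂ
  | _, 0 => 1
  | 0, _+1 => 0
  | n+1, k+1 => q ^ (k+1) * gb q n (k+1) + gb q n k

lemma gb_zero (q : ℂ) (n : ℕ) : gb q n 0 = 1 := by cases n <;> rfl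

lemma gb_succ_succ (q : ℂ) (n k : ℕ) :
    gb q (n+1) (k+1) = q ^ (k+1) * gb q n (k+1) + gb q n k := rfl

lemma gb_of_lt (q : ℂ) : ∀ {n k : ℕ}, n < k → gb q n k = 0 := by
  intro n
  induction n with
  | zero =>
    intro k h
    match k with
    | k+1 => rfl
  | succ n ih =>
    intro k h
    match k with
    | k+1 =>
      rw [gb_succ_succ, ih (by omega), ih (by omega)]
      ring

lemma gb_self (q : ℂ) (n : ℕ) : gb q n n = 1 := by
  induction n with
  | zero => rfl
  | succ n ih => rw [gb_succ_succ, gb_of_lt q (Nat.lt_succ_self n), ih]; ring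

lemma qPoch_zero (a q : ℂ) : qPoch a q 0 = 1 := by simp [qPoch]

lemma qPoch_succ (a q : ℂ) (n : ℕ) :
    qPoch a q (n+1) = qPoch a q n * (1 - a * q ^ n) := Finset.prod_range_succ _ _

lemma qPoch_ne_zero (q : ℂ) (hq : ∀ m : ℕ, 0 < m → q ^ m ≠ 1) (n : ℕ) :
    qPoch q q n ≠ 0 := by
  unfold qPoch
  rw [Finset.prod_ne_zero_iff]
  intro j _
  have : q * q ^ j = q ^ (j+1) := by ring
  rw [this, sub_ne_zero]
  exact fun h => hq (j+1) (Nat.succ_pos j) h.symm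

lemma one_sub_pow_ne_zero (q : ℂ) (hq : ∀ m : ℕ, 0 < m → q ^ m ≠ 1) (j : ℕ) (hj : 0 < j) :
    (1 : ℂ) - q ^ j ≠ 0 := by
  rw [sub_ne_zero]
  exact fun h => hq j hj h.symm

lemma qBinom_eq_gb (q : ℂ) (hq : ∀ m : ℕ, 0 < m → q ^ m ≠ 1) :
    ∀ n k : ℕ, k ≤ n → qBinom q n k = gb q n k := by
  intro n
  induction n with
  | zero =>
    intro k hk
    interval_cases k
    simp [qBinom, qPoch_zero, gb_zero]
  | succ n ih =>
    intro k hk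
    match k with
    | 0 =>
      rw [gb_zero]
      simp only [qBinom, Nat.sub_zero, qPoch_zero, one_mul]
      exact div_self (qPoch_ne_zero q hq _)
    | k+1 =>
      rcases Nat.lt_or_ge (k+1) (n+1) with hlt | hge
      · -- k+1 ≤ n : Pascal
        have hkn : k + 1 ≤ n := by omega
        rw [gb_succ_succ, ← ih (k+1) hkn, ← ih k (by omega)]
        obtain ⟨d, hd⟩ : ∃ d, n = k + 1 + d := ⟨n - (k+1), by omega⟩
        subst hd
        unfold qBinom
        have e1 : k + 1 + d + 1 - (k + 1) = d + 1 := by omega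
        have e2 : k + 1 + d - (k + 1) = d := by omega
        have e3 : k + 1 + d - k = d + 1 := by omega
        rw [e1, e2, e3]
        rw [show k + 1 + d + 1 = (k + 1 + d) + 1 from rfl, qPoch_succ q q (k+1+d),
          qPoch_succ q q d, qPoch_succ q q k]
        have h1 := qPoch_ne_zero q hq k
        have h2 := qPoch_ne_zero q hq d
        have h3 := qPoch_ne_zero q hq (k+1+d)
        have h4 := one_sub_pow_ne_zero q hq (k+1) (by omega)
        have h5 := one_sub_pow_ne_zero q hq (d+1) (by omega)
        have hq1 : q * q ^ (k+1+d) = q ^ (k+1) * (q * q ^ d) := by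
          rw [← pow_succ', ← pow_succ', ← pow_add]
          exact congrArg (q ^ ·) (by omega)
        have hqk : (1 : ℂ) - q * q ^ k = 1 - q ^ (k+1) := by rw [← pow_succ']
        have hqd : (1 : ℂ) - q * q ^ d = 1 - q ^ (d+1) := by rw [← pow_succ']
        rw [hqk, hqd] at *
        field_simp
        rw [hq1]
        ring
      · -- k = n
        have hkn : k = n := by omega
        subst hkn
        rw [gb_succ_succ, gb_of_lt q (Nat.lt_succ_self k), gb_self]
        simp only [qBinom, Nat.sub_self, qPoch_zero, mul_one]
        rw [div_self (qPoch_ne_zero q hq _)]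
        ring

lemma choose_two_succ (k : ℕ) : (k+1).choose 2 = k.choose 2 + k := by
  rw [Nat.choose_succ_succ]
  simp [Nat.choose_one_right]
  omega

/-- Key summation identity at the level of `gb`. -/
lemma key (q u x y : ℂ) (m : ℕ) (G : ℕ → ℂ) :
    (∑ k ∈ range (m+2), gb q (m+1) k * u ^ (k.choose 2) * x ^ (m+1-k) * y ^ k * G k)
  = x * (∑ k ∈ range (m+1), gb q m k * u ^ (k.choose 2) * x ^ (m-k) * (q*y) ^ k * G k)
  + y * (∑ k ∈ range (m+1), gb q m k * u ^ (k.choose 2) * x ^ (m-k) * (u*y) ^ k * G (k+1)) := by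
  set A : ℕ → ℂ := fun k => q ^ k * gb q m k * u ^ (k.choose 2) * x ^ (m+1-k) * y ^ k * G k
    with hA
  set B : ℕ → ℂ := fun k =>
    gb q m k * u ^ ((k+1).choose 2) * x ^ (m-k) * y ^ (k+1) * G (k+1) with hB
  have hxsum : x * (∑ k ∈ range (m+1), gb q m k * u ^ (k.choose 2) * x ^ (m-k) * (q*y) ^ k * G k)
      = ∑ k ∈ range (m+1), A k := by
    rw [Finset.mul_sum]
    refine Finset.sum_congr rfl fun k hk => ?_
    have hk' : k ≤ m := by simpa using Nat.lt_succ_iff.mp (Finset.mem_range.mp hk)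
    have e : m + 1 - k = (m - k) + 1 := by omega
    show _ = q ^ k * gb q m k * u ^ (k.choose 2) * x ^ (m+1-k) * y ^ k * G k
    rw [e, mul_pow, pow_succ]
    ring
  have hysum : y * (∑ k ∈ range (m+1), gb q m k * u ^ (k.choose 2) * x ^ (m-k) * (u*y) ^ k * G (k+1))
      = ∑ k ∈ range (m+1), B k := by
    rw [Finset.mul_sum]
    refine Finset.sum_congr rfl fun k hk => ?_
    show _ = gb q m k * u ^ ((k+1).choose 2) * x ^ (m-k) * y ^ (k+1) * G (k+1)
    rw [choose_two_succ, mul_pow, pow_add, pow_succ]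
    ring
  rw [hxsum, hysum]
  have hsplit : ∑ k ∈ range (m+2), gb q (m+1) k * u ^ (k.choose 2) * x ^ (m+1-k) * y ^ k * G k
      = ∑ k ∈ range (m+1),
          gb q (m+1) (k+1) * u ^ ((k+1).choose 2) * x ^ (m+1-(k+1)) * y ^ (k+1) * G (k+1)
        + gb q (m+1) 0 * u ^ (Nat.choose 0 2) * x ^ (m+1-0) * y ^ 0 * G 0 :=
    Finset.sum_range_succ' _ _
  rw [hsplit]
  have hterm : ∀ k ∈ range (m+1),
      gb q (m+1) (k+1) * u ^ ((k+1).choose 2) * x ^ (m+1-(k+1)) * y ^ (k+1) * G (k+1)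
      = A (k+1) + B k := by
    intro k hk
    show _ = q ^ (k+1) * gb q m (k+1) * u ^ ((k+1).choose 2) * x ^ (m+1-(k+1)) * y ^ (k+1) * G (k+1)
        + gb q m k * u ^ ((k+1).choose 2) * x ^ (m-k) * y ^ (k+1) * G (k+1)
    have e : m + 1 - (k+1) = m - k := by omega
    rw [gb_succ_succ, e]
    ring
  rw [Finset.sum_congr rfl hterm, Finset.sum_add_distrib]
  have hf0 : gb q (m+1) 0 * u ^ (Nat.choose 0 2) * x ^ (m+1-0) * y ^ 0 * G 0 = A 0 := by
    show _ = q ^ 0 * gb q m 0 * u ^ (Nat.choose 0 2) * x ^ (m+1-0) * y ^ 0 * G 0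
    rw [gb_zero, gb_zero]
    ring
  rw [hf0]
  have hAshift : ∑ k ∈ range (m+1), A (k+1) + A 0 = ∑ k ∈ range (m+1), A k := by
    have h2 : ∑ k ∈ range (m+2), A k = ∑ k ∈ range (m+1), A (k+1) + A 0 :=
      Finset.sum_range_succ' A (m+1)
    have h3 : ∑ k ∈ range (m+2), A k = ∑ k ∈ range (m+1), A k + A (m+1) :=
      Finset.sum_range_succ A (m+1)
    have h4 : A (m+1) = 0 := by
      rw [hA]; simp [gb_of_lt q (Nat.lt_succ_self m)]
    rw [h4, add_zero] at h3
    rw [← h2, h3]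
  calc (∑ k ∈ range (m+1), A (k+1) + ∑ k ∈ range (m+1), B k) + A 0
      = (∑ k ∈ range (m+1), A (k+1) + A 0) + ∑ k ∈ range (m+1), B k := by ring
    _ = ∑ k ∈ range (m+1), A k + ∑ k ∈ range (m+1), B k := by rw [hAshift]

lemma Rpoly_gb (q : ℂ) (hq : ∀ m : ℕ, 0 < m → q ^ m ≠ 1) (n : ℕ) (x y u : ℂ) :
    Rpoly q n x y u = ∑ k ∈ range (n+1), gb q n k * u ^ (k.choose 2) * x ^ (n-k) * y ^ k := by
  refine Finset.sum_congr rfl fun k hk => ?_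
  rw [qBinom_eq_gb q hq n k (by simpa using Nat.lt_succ_iff.mp (Finset.mem_range.mp hk))]

lemma Rpoly_succ (q : ℂ) (hq : ∀ m : ℕ, 0 < m → q ^ m ≠ 1) (u x y : ℂ) (n : ℕ) :
    Rpoly q (n+1) x y u = x * Rpoly q n x (q*y) u + y * Rpoly q n x (u*y) u := by
  rw [Rpoly_gb q hq (n+1), Rpoly_gb q hq n, Rpoly_gb q hq n]
  have := key q u x y n (fun _ => 1)
  simpa using this

theorem Rpoly_add_index (q : ℂ) (hq : ∀ m : ℕ, 0 < m → q ^ m ≠ 1) (u x y : ℂ) (n m : ℕ) :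
    Rpoly q (n + m) x y u =
      ∑ k ∈ Finset.range (m + 1),
        qBinom q m k * u ^ (k.choose 2) * x ^ (m - k) * y ^ k *
          Rpoly q n x (q ^ (m - k) * u ^ k * y) u := by
  induction m generalizing y with
  | zero =>
    simp [qBinom, qPoch_zero]
  | succ m ih =>
    have hstep : Rpoly q (n + (m+1)) x y u
        = x * Rpoly q (n+m) x (q*y) u + y * Rpoly q (n+m) x (u*y) u := by
      rw [show n + (m+1) = (n+m) + 1 from rfl]
      exact Rpoly_succ q hq u x y (n+m)
    rw [hstep, ih (q*y), ih (u*y)]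
    -- now match with the key identity with G k = Rpoly q n x (q^(m+1-k) * u^k * y) u
    have hkey := key q u x y m (fun k => Rpoly q n x (q ^ (m+1-k) * u ^ k * y) u)
    have hx : ∑ k ∈ range (m+1),
        qBinom q m k * u ^ (k.choose 2) * x ^ (m-k) * (q*y) ^ k *
          Rpoly q n x (q ^ (m-k) * u ^ k * (q*y)) u
        = ∑ k ∈ range (m+1),
        gb q m k * u ^ (k.choose 2) * x ^ (m-k) * (q*y) ^ k *
          Rpoly q n x (q ^ (m+1-k) * u ^ k * y) u := by
      refine Finset.sum_congr rfl fun k hk => ?_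
      have hk' : k ≤ m := Nat.lt_succ_iff.mp (Finset.mem_range.mp hk)
      have e1 : q ^ (m-k) * u ^ k * (q*y) = q ^ (m+1-k) * u ^ k * y := by
        rw [show m + 1 - k = (m-k) + 1 from by omega, pow_succ]
        ring
      rw [e1, qBinom_eq_gb q hq m k hk']
    have hy : ∑ k ∈ range (m+1),
        qBinom q m k * u ^ (k.choose 2) * x ^ (m-k) * (u*y) ^ k *
          Rpoly q n x (q ^ (m-k) * u ^ k * (u*y)) u
        = ∑ k ∈ range (m+1),
        gb q m k * u ^ (k.choose 2) * x ^ (m-k) * (u*y) ^ k *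
          Rpoly q n x (q ^ (m+1-(k+1)) * u ^ (k+1) * y) u := by
      refine Finset.sum_congr rfl fun k hk => ?_
      have hk' : k ≤ m := Nat.lt_succ_iff.mp (Finset.mem_range.mp hk)
      have e1 : q ^ (m-k) * u ^ k * (u*y) = q ^ (m+1-(k+1)) * u ^ (k+1) * y := by
        rw [show m + 1 - (k+1) = m - k from by omega, pow_succ]
        ring
      rw [e1, qBinom_eq_gb q hq m k hk']
    rw [hx, hy, ← hkey]
    refine Finset.sum_congr rfl fun k hk => ?_
    have hk' : k ≤ m + 1 := Nat.lt_succ_iff.mp (Finset.mem_range.mp hk)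
    rw [qBinom_eq_gb q hq (m+1) k hk']
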